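/- arXiv:2211.11056 — 5 statements merged into one kernel-verified Lean document; each statement's English description precedes it below -/
import Mathlib

section
/- Let h : ℝ → ℝ be differentiable with h(0) ≤ 0, and suppose that for every t ≥ 0 with h(t) = 0 one has h'(t) < 0. Then h(t) ≤ 0 for all t ≥ 0. -/
/-- Scalar comparison lemma for forward invariance: if `h` is differentiable,
`h 0 ≤ 0`, and whenever `h t = 0` at a time `t ≥ 0` the derivative is strictly
negative, then `h t ≤ 0` for all `t ≥ 0`. -/
theorem barrier_scalar_invariance (h : ℝ → ℝ) (hdiff : Differentiable ℝ h)
    (h0 : h 0 ≤ 0) (hbnd : ∀ t, 0 ≤ t → h t = 0 → deriv h t < 0) :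
    ∀ t, 0 ≤ t → h t ≤ 0 := by
  intro t ht0
  by_contra hpos
  push_neg at hpos
  have hcont : Continuous h := hdiff.continuous
  -- there is a zero in [0, t]
  have hzero : ∃ s ∈ Set.Icc 0 t, h s = 0 := by
    have := intermediate_value_Icc ht0 hcont.continuousOn (a := 0) (b := t)
    exact (Set.mem_image _ _ _).1 (this ⟨h0, hpos.le⟩) |>.imp fun s hs => ⟨hs.1, hs.2⟩
  set S : Set ℝ := {u | u ∈ Set.Icc 0 t ∧ h u = 0} with hS
  have hSne : S.Nonempty := hzero
  have hSbdd : BddAbove S := ⟨t, fun u hu => hu.1.2⟩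
  have hSclosed : IsClosed S := by
    have : S = Set.Icc 0 t ∩ h ⁻¹' {0} := by ext u; simp [hS]
    rw [this]
    exact isClosed_Icc.inter (isClosed_singleton.preimage hcont)
  set s := sSup S with hs
  have hsS : s ∈ S := hSclosed.csSup_mem hSne hSbdd
  have hs0 : 0 ≤ s := hsS.1.1
  have hst : s ≤ t := hsS.1.2
  have hhs : h s = 0 := hsS.2
  have hslt : s < t := by
    rcases hst.lt_or_eq with h' | h'
    · exact h'
    · exact absurd hpos (by rw [← h', hhs]; exact lt_irrefl 0)
  -- h is positive on (s, t]
  have hposIoc : ∀ u ∈ Set.Ioc s t, 0 < h u := by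
    intro u hu
    rcases lt_trichotomy (h u) 0 with hlt | heq | hgt
    · -- zero between u and t, contradicting sup
      have : ∃ v ∈ Set.Icc u t, h v = 0 := by
        have := intermediate_value_Icc hu.2 hcont.continuousOn (a := u) (b := t)
        exact (Set.mem_image _ _ _).1 (this ⟨hlt.le, hpos.le⟩) |>.imp fun v hv => ⟨hv.1, hv.2⟩
      obtain ⟨v, hv, hv0⟩ := this
      have : v ≤ s := le_csSup hSbdd ⟨⟨le_trans hs0 (le_trans hu.1.le hv.1), hv.2⟩, hv0⟩
      exact absurd (lt_of_lt_of_le hu.1 hv.1) (not_lt.2 this)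
    · have : u ≤ s := le_csSup hSbdd ⟨⟨le_trans hs0 hu.1.le, hu.2⟩, heq⟩
      exact absurd hu.1 (not_lt.2 this)
    · exact hgt
  -- derivative at s is nonneg: contradiction
  have hderiv : 0 ≤ deriv h s := by
    have hd : HasDerivAt h (deriv h s) s := (hdiff s).hasDerivAt
    have hten : Filter.Tendsto (slope h s) (nhdsWithin s (Set.Ioi s)) (nhds (deriv h s)) :=
      (hasDerivAt_iff_tendsto_slope.1 hd).mono_left
        (nhdsWithin_mono s fun u hu => ne_of_gt hu)
    refine ge_of_tendsto hten ?_
    filter_upwards [Ioo_mem_nhdsGT_of_mem ⟨le_refl s, hslt⟩] with u hu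
    have h1 : 0 < h u := hposIoc u ⟨hu.1, hu.2.le⟩
    have h2 : 0 < u - s := sub_pos.2 hu.1
    rw [slope_def_field, hhs, sub_zero]
    positivity
  exact absurd (hbnd s hs0 hhs) (not_lt.2 hderiv)
end

section
/- Let E be a finite-dimensional real inner product space, let φ : E → ℝ be continuously differentiable, and let F : E → E be continuous (the closed-loop vector field F(y) = f(y) + g(y)k(y)). Define the safe set S = {y ∈ E : φ(y) ≤ 0}. Suppose that for every y ∈ E with φ(y) = 0 one has ⟨∇φ(y), F(y)⟩ < 0. Then for every differentiable curve x : ℝ → E satisfying x'(t) = F(x(t)) for all t ≥ 0 and x(0) ∈ S, we have x(t) ∈ S for all t ≥ 0. -/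
open RealInnerProductSpace

/-- Forward invariance of the zero-sublevel set `S = {y | φ y ≤ 0}` of a `C¹`
barrier function `φ` under a continuous closed-loop vector field `F`, when the
Lie derivative `⟪∇φ(y), F(y)⟫` is strictly negative on the boundary `{φ = 0}`. -/
theorem cbf_forward_invariance
    {E : Type*} [NormedAddCommGroup E] [InnerProductSpace ℝ E]
    [FiniteDimensional ℝ E]
    (φ : E → ℝ) (hφ : ContDiff ℝ 1 φ)
    (F : E → E) (hF : Continuous F)
    (hbnd : ∀ y : E, φ y = 0 → ⟪gradient φ y, F y⟫ < 0) :
    ∀ x : ℝ → E, Differentiable ℝ x → (∀ t, 0 ≤ t → deriv x t = F (x t)) →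
      x 0 ∈ {y : E | φ y ≤ 0} → ∀ t, 0 ≤ t → x t ∈ {y : E | φ y ≤ 0} := by
  intro x hx hode hx0 t ht
  set ψ : ℝ → ℝ := fun u => φ (x u) with hψdef
  have hψc : Continuous ψ := (hφ.continuous).comp hx.continuous
  have hψd : ∀ u : ℝ, 0 ≤ u → HasDerivAt ψ ⟪gradient φ (x u), F (x u)⟫ u := by
    intro u hu
    have hgrad : HasGradientAt φ (gradient φ (x u)) (x u) :=
      (hφ.differentiable one_ne_zero (x u)).hasGradientAt
    have hfd := hgrad.hasFDerivAt
    have hxd : HasDerivAt x (F (x u)) u := by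
      have := (hx u).hasDerivAt
      rwa [hode u hu] at this
    have := hfd.comp_hasDerivAt u hxd
    simpa [InnerProductSpace.toDual_apply_apply, Function.comp_def, hψdef] using this
  -- suppose for contradiction ψ t > 0
  by_contra hcon
  have hψt : 0 < ψ t := lt_of_not_ge hcon
  set A : Set ℝ := Set.Icc 0 t ∩ ψ ⁻¹' Set.Iic 0 with hAdef
  have hA0 : (0 : ℝ) ∈ A := ⟨⟨le_rfl, ht⟩, hx0⟩
  have hAclosed : IsClosed A := isClosed_Icc.inter (isClosed_Iic.preimage hψc)
  have hAbdd : BddAbove A := bddAbove_Icc.mono Set.inter_subset_left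
  set s : ℝ := sSup A with hsdef
  have hsA : s ∈ A := hAclosed.csSup_mem ⟨0, hA0⟩ hAbdd
  have hs0 : 0 ≤ s := hsA.1.1
  have hst : s ≤ t := hsA.1.2
  have hψs : ψ s ≤ 0 := hsA.2
  have hslt : s < t := hst.lt_of_ne (fun h => absurd hψt (not_lt.mpr (h ▸ hψs)))
  -- in both cases, ψ < 0 eventually to the right of s
  have hev : ∀ᶠ u in nhdsWithin s (Set.Ioi s), ψ u < 0 := by
    rcases lt_or_eq_of_le hψs with hlt | heq
    · exact eventually_nhdsWithin_of_eventually_nhds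
        ((hψc.tendsto s).eventually_lt_const hlt)
    · have hd : ⟪gradient φ (x s), F (x s)⟫ < 0 := hbnd (x s) heq
      have hslope : Filter.Tendsto (slope ψ s) (nhdsWithin s {s}ᶜ)
          (nhds ⟪gradient φ (x s), F (x s)⟫) :=
        hasDerivAt_iff_tendsto_slope.mp (hψd s hs0)
      have hslope' : Filter.Tendsto (slope ψ s) (nhdsWithin s (Set.Ioi s))
          (nhds ⟪gradient φ (x s), F (x s)⟫) :=
        hslope.mono_left (nhdsWithin_mono s (fun u hu => ne_of_gt hu))
      have hev2 : ∀ᶠ u in nhdsWithin s (Set.Ioi s), slope ψ s u < 0 :=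
        hslope'.eventually_lt_const hd
      filter_upwards [hev2, self_mem_nhdsWithin] with u hu hu'
      have hup : 0 < u - s := sub_pos.mpr hu'
      have : slope ψ s u * (u - s) < 0 := mul_neg_of_neg_of_pos hu hup
      rw [slope_def_field, div_mul_cancel₀ _ (ne_of_gt hup)] at this
      linarith [heq, this]
  have hev' : ∀ᶠ u in nhdsWithin s (Set.Ioi s), ψ u < 0 ∧ u < t := by
    refine hev.and (eventually_nhdsWithin_of_eventually_nhds ?_)
    exact Filter.tendsto_id.eventually_lt_const hslt
  obtain ⟨u, ⟨huψ, hut⟩, hus⟩ := (hev'.and self_mem_nhdsWithin).exists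
  have huA : u ∈ A := ⟨⟨le_of_lt (lt_of_le_of_lt hs0 hus), le_of_lt hut⟩, le_of_lt huψ⟩
  exact absurd (le_csSup hAbdd huA) (not_le.mpr hus)
end

section
/- Let h : ℝ → ℝ be differentiable and let α : ℝ → ℝ be continuous, strictly monotonically increasing, with α(0) = 0. Suppose h(0) ≤ 0 and h'(t) ≤ −α(h(t)) for all t ≥ 0. Then h(t) ≤ 0 for all t ≥ 0. -/
/-- Comparison lemma for the class-κ CBF formulation: if `α` is a class-κ
function (continuous, strictly increasing, `α 0 = 0`), `h 0 ≤ 0`, and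
`h'(t) ≤ -α (h t)` for all `t ≥ 0`, then `h t ≤ 0` for all `t ≥ 0`. -/
theorem class_kappa_comparison (h : ℝ → ℝ) (hdiff : Differentiable ℝ h)
    (α : ℝ → ℝ) (hαc : Continuous α) (hαmono : StrictMono α) (hα0 : α 0 = 0)
    (h0 : h 0 ≤ 0) (hineq : ∀ t, 0 ≤ t → deriv h t ≤ -α (h t)) :
    ∀ t, 0 ≤ t → h t ≤ 0 := by
  by_contra hcon
  push_neg at hcon
  obtain ⟨t, ht0, ht⟩ := hcon
  set S : Set ℝ := {u | u ∈ Set.Icc (0:ℝ) t ∧ h u ≤ 0} with hS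
  have hScl : IsClosed S := by
    apply IsClosed.inter isClosed_Icc
    exact isClosed_le hdiff.continuous continuous_const
  have hScpt : IsCompact S :=
    (isCompact_Icc : IsCompact (Set.Icc (0:ℝ) t)).of_isClosed_subset hScl
      (fun u hu => hu.1)
  have hSne : S.Nonempty := ⟨0, ⟨le_refl 0, ht0⟩, h0⟩
  obtain ⟨hsmem, hsub⟩ := hScpt.exists_isGreatest hSne
  set s := sSup S with hs
  have hsS : s ∈ S := hScpt.sSup_mem hSne
  have hst : s ≤ t := hsS.1.2
  have hs0 : (0:ℝ) ≤ s := hsS.1.1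
  have hhs : h s ≤ 0 := hsS.2
  have hslt : s < t := by
    rcases lt_or_eq_of_le hst with h' | h'
    · exact h'
    · exact absurd (h' ▸ hhs) (not_le.mpr ht)
  have hpos : ∀ u ∈ Set.Ioo s t, 0 < h u := by
    intro u hu
    by_contra hle
    push_neg at hle
    have huS : u ∈ S := ⟨⟨le_trans hs0 hu.1.le, hu.2.le⟩, hle⟩
    exact absurd (le_csSup hScpt.bddAbove huS) (not_le.mpr hu.1)
  have hanti : StrictAntiOn h (Set.Icc s t) := by
    apply strictAntiOn_of_deriv_neg (convex_Icc s t) hdiff.continuous.continuousOn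
    intro u hu
    rw [interior_Icc] at hu
    have h1 : 0 < α (h u) := by
      have := hαmono (hpos u hu)
      rwa [hα0] at this
    calc deriv h u ≤ -α (h u) := hineq u (le_trans hs0 hu.1.le)
      _ < 0 := by linarith
  have : h t < h s := hanti (Set.left_mem_Icc.mpr hst) (Set.right_mem_Icc.mpr hst) hslt
  linarith
end

section
/- Let r ≥ 1, let c : ℕ → ℝ with c(j) > 0 for all j < r − 1, and let h : ℝ → ℝ be r-times continuously differentiable. Define functions F_j : ℝ → ℝ recursively by F_0 = h and F_{j+1}(t) = F_j(t) + c(j)·F_j'(t). Suppose F_j(0) ≤ 0 for every j ≤ r − 1, and F_{r−1}(t) ≤ 0 for all t ≥ 0. Then h(t) ≤ 0 for all t ≥ 0. -/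
/-- The higher-order CBF terms along a trajectory: `hocbf c h 0 = h` and
`hocbf c h (j+1) = hocbf c h j + c j * (hocbf c h j)'`. -/
noncomputable def hocbf (c : ℕ → ℝ) (h : ℝ → ℝ) : ℕ → (ℝ → ℝ)
  | 0 => h
  | j + 1 => fun t => hocbf c h j t + c j * deriv (hocbf c h j) t

lemma hocbf_contDiff (c : ℕ → ℝ) (h : ℝ → ℝ) (r : ℕ) (hh : ContDiff ℝ r h) :
    ∀ j, j ≤ r → ContDiff ℝ ((r - j : ℕ) : ℕ∞) (hocbf c h j) := by
  intro j
  induction j with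
  | zero => intro _; simpa [hocbf] using hh
  | succ j ih =>
    intro hjr
    have hj : ContDiff ℝ ((r - j : ℕ) : ℕ∞) (hocbf c h j) := ih (le_of_lt hjr)
    have heq : (r - j : ℕ) = (r - (j + 1)) + 1 := by omega
    have heq2 : ((r - j : ℕ) : ℕ∞) = ((r - (j + 1) : ℕ) : ℕ∞) + 1 := by
      rw [heq]; push_cast; ring
    rw [heq2] at hj
    rw [WithTop.coe_add, WithTop.coe_one, contDiff_succ_iff_deriv] at hj
    have h1 : ContDiff ℝ ((r - (j+1) : ℕ) : ℕ∞) (hocbf c h j) := by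
      refine (ih (le_of_lt hjr)).of_le ?_
      exact_mod_cast Nat.cast_le.mpr (Nat.sub_le_sub_left (Nat.le_succ j) r)
    show ContDiff ℝ _ (fun t => hocbf c h j t + c j * deriv (hocbf c h j) t)
    exact h1.add (contDiff_const.mul hj.2.2)

lemma decay {f : ℝ → ℝ} {c : ℝ} (hc : 0 < c) (hf : Differentiable ℝ f)
    (h0 : f 0 ≤ 0) (hineq : ∀ t, 0 ≤ t → f t + c * deriv f t ≤ 0) :
    ∀ t, 0 ≤ t → f t ≤ 0 := by
  set g : ℝ → ℝ := fun t => f t * Real.exp (t / c) with hg_def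
  have hg : ∀ t, HasDerivAt g
      (deriv f t * Real.exp (t / c) + f t * (Real.exp (t / c) * (1 / c))) t := by
    intro t
    exact ((hf t).hasDerivAt).mul (((hasDerivAt_id t).div_const c).exp)
  have hgdiff : Differentiable ℝ g := fun t => (hg t).differentiableAt
  have hganti : AntitoneOn g (Set.Ici (0:ℝ)) := by
    apply antitoneOn_of_deriv_nonpos (convex_Ici 0) hgdiff.continuous.continuousOn
      (fun t _ => (hgdiff t).differentiableWithinAt)
    intro t ht
    rw [interior_Ici] at ht
    rw [(hg t).deriv]
    have h1 := hineq t (le_of_lt ht)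
    have h3 : (0:ℝ) ≤ Real.exp (t / c) / c := (div_pos (Real.exp_pos _) hc).le
    have key : deriv f t * Real.exp (t / c) + f t * (Real.exp (t / c) * (1 / c))
        = (f t + c * deriv f t) * (Real.exp (t / c) / c) := by
      field_simp
      ring
    rw [key]
    exact mul_nonpos_iff.mpr (Or.inr ⟨h1, h3⟩)
  intro t ht
  have hle := hganti (Set.self_mem_Ici) (Set.mem_Ici.mpr ht) ht
  have hg0 : g 0 = f 0 := by simp [hg_def]
  have hgt : f t * Real.exp (t / c) ≤ 0 := by
    calc f t * Real.exp (t / c) = g t := rfl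
    _ ≤ g 0 := hle
    _ = f 0 := hg0
    _ ≤ 0 := h0
  nlinarith [Real.exp_pos (t / c)]

/-- Higher-order CBF lemma: for `r ≥ 1` and positive coefficients `c j`
(`j < r - 1`), if all the terms `φ_j` (`j ≤ r - 1`) are nonpositive at time `0`
and the highest-order term `φ_{r-1}` stays nonpositive for all `t ≥ 0`, then
the safety specification `h` stays nonpositive for all `t ≥ 0`. -/
theorem higher_order_cbf_invariance (r : ℕ) (hr : 1 ≤ r) (c : ℕ → ℝ)
    (hc : ∀ j, j < r - 1 → 0 < c j) (h : ℝ → ℝ) (hh : ContDiff ℝ r h)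
    (h0 : ∀ j, j ≤ r - 1 → hocbf c h j 0 ≤ 0)
    (htop : ∀ t, 0 ≤ t → hocbf c h (r - 1) t ≤ 0) :
    ∀ t, 0 ≤ t → h t ≤ 0 := by
  have key : ∀ k, k ≤ r - 1 → ∀ t, 0 ≤ t → hocbf c h (r - 1 - k) t ≤ 0 := by
    intro k
    induction k with
    | zero => intro _; simpa using htop
    | succ k ih =>
      intro hk t ht
      have hprev : ∀ t, 0 ≤ t → hocbf c h (r - 1 - k) t ≤ 0 := ih (by omega)
      have hjk : r - 1 - k = (r - 1 - (k + 1)) + 1 := by omega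
      rw [hjk] at hprev
      have hjlt : r - 1 - (k + 1) < r - 1 := by omega
      have hjr : r - 1 - (k + 1) ≤ r := by omega
      have hdiff : Differentiable ℝ (hocbf c h (r - 1 - (k + 1))) := by
        have hcd := hocbf_contDiff c h r hh (r - 1 - (k + 1)) hjr
        have h2 : (r - (r - 1 - (k + 1)) : ℕ) = k + 2 := by omega
        rw [h2] at hcd
        have h1 : (1 : WithTop ℕ∞) ≤ ((k + 2 : ℕ) : ℕ∞) := by
          exact_mod_cast Nat.succ_le_succ (Nat.zero_le _)
        exact (hcd.of_le h1).differentiable one_ne_zero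
      have hineq : ∀ s, 0 ≤ s → hocbf c h (r - 1 - (k + 1)) s
          + c (r - 1 - (k + 1)) * deriv (hocbf c h (r - 1 - (k + 1))) s ≤ 0 := by
        intro s hs
        simpa [hocbf] using hprev s hs
      exact decay (hc _ hjlt) hdiff (h0 _ (le_of_lt hjlt)) hineq t ht
  have := key (r - 1) le_rfl
  simpa [hocbf] using this
end

section
/- Let E be a finite-dimensional real inner product space, let φ : E → ℝ be continuously differentiable, let F : E → E be continuous, and let α : ℝ → ℝ be continuous, strictly monotonically increasing, with α(0) = 0. Suppose that for all y ∈ E, ⟨∇φ(y), F(y)⟩ ≤ −α(φ(y)). Then for every differentiable curve x : ℝ → E satisfying x'(t) = F(x(t)) for all t ≥ 0 and φ(x(0)) ≤ 0, we have φ(x(t)) ≤ 0 for all t ≥ 0. -/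
open RealInnerProductSpace

/-- Class-κ CBF forward invariance: if `φ` is `C¹`, `F` is continuous, `α` is a
class-κ function (continuous, strictly increasing, `α 0 = 0`), and
`⟪∇φ(y), F(y)⟫ ≤ -α (φ y)` for all states `y`, then every differentiable
solution of `x' = F ∘ x` on `t ≥ 0` starting with `φ (x 0) ≤ 0` satisfies
`φ (x t) ≤ 0` for all `t ≥ 0`. -/
theorem class_kappa_cbf_forward_invariance
    {E : Type*} [NormedAddCommGroup E] [InnerProductSpace ℝ E]
    [FiniteDimensional ℝ E]
    (φ : E → ℝ) (hφ : ContDiff ℝ 1 φ)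
    (F : E → E) (hF : Continuous F)
    (α : ℝ → ℝ) (hαc : Continuous α) (hαmono : StrictMono α) (hα0 : α 0 = 0)
    (hdecr : ∀ y : E, ⟪gradient φ y, F y⟫ ≤ -α (φ y)) :
    ∀ x : ℝ → E, Differentiable ℝ x → (∀ t, 0 ≤ t → deriv x t = F (x t)) →
      φ (x 0) ≤ 0 → ∀ t, 0 ≤ t → φ (x t) ≤ 0 := by
  intro x hx hx' hx0 t ht
  by_contra hpos
  push_neg at hpos
  set v : ℝ → ℝ := fun s => φ (x s) with hv
  have hφd : Differentiable ℝ φ := hφ.differentiable one_ne_zero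
  have hvc : Continuous v := hφd.continuous.comp hx.continuous
  have hvderiv : ∀ s : ℝ, HasDerivAt v ⟪gradient φ (x s), deriv x s⟫ s := by
    intro s
    have h1 : HasFDerivAt φ ((InnerProductSpace.toDual ℝ E) (gradient φ (x s))) (x s) :=
      (hφd (x s)).hasGradientAt
    have h2 := h1.comp_hasDerivAt s (hx s).hasDerivAt
    have h3 : HasDerivAt v ((InnerProductSpace.toDual ℝ E) (gradient φ (x s)) (deriv x s)) s := h2
    simpa [InnerProductSpace.toDual_apply_apply] using h3
  have ht0 : 0 < t := by
    rcases ht.lt_or_eq with h | h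
    · exact h
    · exfalso; rw [← h] at hpos; exact absurd hx0 (not_le.mpr hpos)
  set S : Set ℝ := Set.Icc 0 t ∩ {s | v s ≤ 0} with hS
  have hSne : S.Nonempty := ⟨0, ⟨le_rfl, ht⟩, hx0⟩
  have hSbdd : BddAbove S := ⟨t, fun s hs => hs.1.2⟩
  have hSclosed : IsClosed S := isClosed_Icc.inter (isClosed_le hvc continuous_const)
  set t₀ : ℝ := sSup S with ht₀
  have ht₀S : t₀ ∈ S := hSclosed.csSup_mem hSne hSbdd
  have ht₀le : v t₀ ≤ 0 := ht₀S.2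
  have ht₀nn : 0 ≤ t₀ := ht₀S.1.1
  have ht₀lt : t₀ < t := lt_of_le_of_ne ht₀S.1.2 (by
    intro h; rw [h] at ht₀le; exact absurd ht₀le (not_le.mpr hpos))
  have hgt : ∀ s ∈ Set.Ioc t₀ t, 0 < v s := by
    intro s hs
    by_contra hle
    push_neg at hle
    have hsS : s ∈ S := ⟨⟨le_trans ht₀nn hs.1.le, hs.2⟩, hle⟩
    exact absurd (le_csSup hSbdd hsS) (not_le.mpr hs.1)
  have hvt₀ : v t₀ = 0 := by
    refine le_antisymm ht₀le ?_
    have htend : Filter.Tendsto v (nhdsWithin t₀ (Set.Ioi t₀)) (nhds (v t₀)) :=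
      (hvc.continuousAt.tendsto).mono_left nhdsWithin_le_nhds
    refine ge_of_tendsto htend ?_
    filter_upwards [Ioc_mem_nhdsGT_of_mem ⟨le_rfl, ht₀lt⟩] with s hs
    exact (hgt s hs).le
  have hanti : AntitoneOn v (Set.Icc t₀ t) := by
    apply antitoneOn_of_deriv_nonpos (convex_Icc t₀ t) hvc.continuousOn
    · intro s hs
      exact ((hvderiv s).differentiableAt).differentiableWithinAt
    · intro s hs
      rw [interior_Icc] at hs
      have hsnn : 0 ≤ s := le_trans ht₀nn hs.1.le
      have hd : deriv v s = ⟪gradient φ (x s), F (x s)⟫ := by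
        rw [(hvderiv s).deriv, hx' s hsnn]
      rw [hd]
      have hvs : 0 < v s := hgt s ⟨hs.1, hs.2.le⟩
      have hα : 0 < α (v s) := hα0 ▸ hαmono hvs
      have := hdecr (x s)
      linarith
  have := hanti ⟨le_rfl, ht₀lt.le⟩ ⟨ht₀lt.le, le_rfl⟩ ht₀lt.le
  rw [hvt₀] at this
  exact absurd this (not_le.mpr hpos)
end
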